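/- For every graph G on n vertices, α₁(G) ≤ n·b(G)/4. -/

import Mathlib

open SimpleGraph Finset

variable {V : Type*} [Fintype V] [DecidableEq V]

/-- `A` is a triangle-independent edge set of `G`: a set of edges of `G`
containing at most one edge from each triangle of `G`. -/
def IsTriangleIndep (G : SimpleGraph V) (A : Finset (Sym2 V)) : Prop :=
  (A : Set (Sym2 V)) ⊆ G.edgeSet ∧
    ∀ a b c : V, G.Adj a b → G.Adj b c → G.Adj a c →
      ({s(a, b), s(b, c), s(a, c)} ∩ A).card ≤ 1

/-- `α₁(G)`: the maximum size of a triangle-independent set in `G`. -/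
noncomputable def alphaOne (G : SimpleGraph V) : ℕ :=
  sSup {k | ∃ A : Finset (Sym2 V), IsTriangleIndep G A ∧ A.card = k}

/-- `τ_B(G)`: the minimum size of an edge set of `G` whose deletion makes `G` bipartite. -/
noncomputable def tauB (G : SimpleGraph V) : ℕ :=
  sInf {k | ∃ D : Finset (Sym2 V), (D : Set (Sym2 V)) ⊆ G.edgeSet ∧
    (G.deleteEdges (D : Set (Sym2 V))).Colorable 2 ∧ D.card = k}

/-- `b(G)`: the maximum size of a vertex set inducing a bipartite subgraph of `G`. -/
noncomputable def bipNum (G : SimpleGraph V) : ℕ :=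
  sSup {k | ∃ B : Finset V, (G.induce (B : Set V)).Colorable 2 ∧ B.card = k}

/-- Two edges of a triangle cannot both lie in a triangle-independent set. -/
lemma no_two_edges {G : SimpleGraph V} {A : Finset (Sym2 V)} (hA : IsTriangleIndep G A)
    {a b c : V} (hab : G.Adj a b) (hbc : G.Adj b c) (hac : G.Adj a c)
    (h1 : s(a, b) ∈ A) (h2 : s(b, c) ∈ A) : False := by
  have hc := hA.2 a b c hab hbc hac
  have hne : s(a, b) ≠ s(b, c) := by
    intro h
    rw [Sym2.eq_iff] at h
    rcases h with ⟨h, h'⟩ | ⟨h, -⟩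
    · exact hab.ne h
    · exact hac.ne h
  have hsub : ({s(a, b), s(b, c)} : Finset (Sym2 V)) ⊆
      ({s(a, b), s(b, c), s(a, c)} : Finset (Sym2 V)) ∩ A := by
    intro e he
    rw [Finset.mem_insert, Finset.mem_singleton] at he
    rcases he with rfl | rfl <;> simp [h1, h2]
  have h2le : 2 ≤ (({s(a, b), s(b, c), s(a, c)} : Finset (Sym2 V)) ∩ A).card := by
    calc 2 = ({s(a, b), s(b, c)} : Finset (Sym2 V)).card := (Finset.card_pair hne).symm
    _ ≤ _ := Finset.card_le_card hsub
  omega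

/-- For every graph `G` on `n` vertices, `α₁(G) ≤ n b(G) / 4`. -/
theorem alphaOne_le (G : SimpleGraph V) :
    (alphaOne G : ℝ) ≤ (Fintype.card V : ℝ) * (bipNum G : ℝ) / 4 := by
  classical
  -- obtain a triangle-independent set achieving alphaOne
  obtain ⟨A, hA, hcard⟩ :
      ∃ A : Finset (Sym2 V), IsTriangleIndep G A ∧ A.card = alphaOne G := by
    have h0 : (0 : ℕ) ∈ {k | ∃ A : Finset (Sym2 V), IsTriangleIndep G A ∧ A.card = k} :=
      ⟨∅, ⟨by simp, fun a b c _ _ _ => by simp⟩, rfl⟩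
    have hbdd : BddAbove {k | ∃ A : Finset (Sym2 V), IsTriangleIndep G A ∧ A.card = k} :=
      ⟨Fintype.card (Sym2 V), fun k ⟨A, _, hk⟩ => hk ▸ A.card_le_univ⟩
    exact Nat.sSup_mem ⟨0, h0⟩ hbdd
  set H : SimpleGraph V := SimpleGraph.fromEdgeSet (A : Set (Sym2 V)) with hH
  have hAdj : ∀ x y : V, H.Adj x y ↔ s(x, y) ∈ A := by
    intro x y
    rw [hH, fromEdgeSet_adj]
    constructor
    · intro h; exact_mod_cast h.1
    · intro h
      exact ⟨by exact_mod_cast h, (G.mem_edgeSet.mp (hA.1 h)).ne⟩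
  have hGAdj : ∀ x y : V, H.Adj x y → G.Adj x y := by
    intro x y h
    exact G.mem_edgeSet.mp (hA.1 ((hAdj x y).1 h))
  have hmemA : ∀ x y : V, H.Adj x y → s(x, y) ∈ A := fun x y h => (hAdj x y).1 h
  -- key: for each edge of H, the degree sum is at most bipNum G
  have hkey : ∀ u v : V, H.Adj u v → H.degree u + H.degree v ≤ bipNum G := by
    intro u v huv
    have hGuv : G.Adj u v := hGAdj u v huv
    have hdisj : Disjoint (H.neighborFinset u) (H.neighborFinset v) := by
      rw [Finset.disjoint_left]
      intro w hwu hwv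
      rw [mem_neighborFinset] at hwu hwv
      have h2 : s(w, v) ∈ A := by rw [Sym2.eq_swap]; exact hmemA v w hwv
      exact no_two_edges hA (hGAdj u w hwu) (hGAdj v w hwv).symm hGuv
        (hmemA u w hwu) h2
    set B : Finset V := H.neighborFinset u ∪ H.neighborFinset v with hB
    -- the set B induces a bipartite subgraph of G
    have hcol : (G.induce (B : Set V)).Colorable 2 := by
      refine ⟨SimpleGraph.Coloring.mk
        (fun x => if (x : V) ∈ H.neighborFinset u then 0 else 1) ?_⟩
      rintro ⟨x, hx⟩ ⟨y, hy⟩ hxy heq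
      have hGxy : G.Adj x y := hxy
      rw [Finset.mem_coe, hB, Finset.mem_union] at hx hy
      by_cases hxu : x ∈ H.neighborFinset u
      · by_cases hyu : y ∈ H.neighborFinset u
        · -- both adjacent to u in H: forbidden triangle x-u-y
          rw [mem_neighborFinset] at hxu hyu
          have h1 : s(x, u) ∈ A := by rw [Sym2.eq_swap]; exact hmemA u x hxu
          exact no_two_edges hA (hGAdj u x hxu).symm (hGAdj u y hyu) hGxy
            h1 (hmemA u y hyu)
        · simp [hxu, hyu] at heq
      · by_cases hyu : y ∈ H.neighborFinset u
        · simp [hxu, hyu] at heq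
        · have hxv : x ∈ H.neighborFinset v := hx.resolve_left hxu
          have hyv : y ∈ H.neighborFinset v := hy.resolve_left hyu
          rw [mem_neighborFinset] at hxv hyv
          have h1 : s(x, v) ∈ A := by rw [Sym2.eq_swap]; exact hmemA v x hxv
          exact no_two_edges hA (hGAdj v x hxv).symm (hGAdj v y hyv) hGxy
            h1 (hmemA v y hyv)
    have hBcard : B.card = H.degree u + H.degree v := by
      rw [hB, Finset.card_union_of_disjoint hdisj, card_neighborFinset_eq_degree,
        card_neighborFinset_eq_degree]
    have hmem : H.degree u + H.degree v ∈
        {k | ∃ B : Finset V, (G.induce (B : Set V)).Colorable 2 ∧ B.card = k} :=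
      ⟨B, hcol, hBcard⟩
    exact le_csSup ⟨Fintype.card V, fun k ⟨B, _, hk⟩ => hk ▸ B.card_le_univ⟩ hmem
  -- handshake: degree sum is twice the number of edges
  have hsum : ∑ v, H.degree v = 2 * A.card := by
    refine (H.sum_degrees_eq_twice_card_edges).trans ?_
    congr 2
    ext e
    simp only [mem_edgeFinset]
    rw [hH, edgeSet_fromEdgeSet]
    simp only [Set.mem_diff, Finset.mem_coe, Set.mem_setOf_eq]
    exact ⟨fun h => h.1, fun h => ⟨h, G.not_isDiag_of_mem_edgeSet (hA.1 h)⟩⟩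
  -- symmetry of the double count
  have hsym : ∑ w, ∑ x ∈ H.neighborFinset w, H.degree x = ∑ w, H.degree w * H.degree w := by
    simp_rw [neighborFinset_eq_filter, Finset.sum_filter]
    rw [Finset.sum_comm]
    refine Finset.sum_congr rfl fun w _ => ?_
    have : ∀ v : V, (if H.Adj v w then H.degree w else 0)
        = (if H.Adj w v then H.degree w else 0) := by
      intro v; exact if_congr (H.adj_comm v w) rfl rfl
    simp_rw [this]
    rw [Finset.sum_ite, Finset.sum_const_zero, add_zero, Finset.sum_const, smul_eq_mul,
      ← card_neighborFinset_eq_degree, neighborFinset_eq_filter]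
  -- the main counting inequality
  have hineq : 2 * ∑ w, H.degree w * H.degree w ≤ 2 * A.card * bipNum G := by
    calc 2 * ∑ w, H.degree w * H.degree w
        = ∑ w, ∑ x ∈ H.neighborFinset w, (H.degree w + H.degree x) := by
          have expand : ∀ w : V, ∑ x ∈ H.neighborFinset w, (H.degree w + H.degree x)
              = H.degree w * H.degree w + ∑ x ∈ H.neighborFinset w, H.degree x := by
            intro w
            rw [Finset.sum_add_distrib, Finset.sum_const, card_neighborFinset_eq_degree,
              smul_eq_mul]
          simp_rw [expand]
          rw [Finset.sum_add_distrib, hsym, two_mul]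
    _ ≤ ∑ w, ∑ x ∈ H.neighborFinset w, bipNum G := by
          refine Finset.sum_le_sum fun w _ => Finset.sum_le_sum fun x hx => ?_
          exact hkey w x ((mem_neighborFinset H w x).1 hx)
    _ = (∑ w, H.degree w) * bipNum G := by
          simp_rw [Finset.sum_const, card_neighborFinset_eq_degree, smul_eq_mul]
          rw [Finset.sum_mul]
    _ = 2 * A.card * bipNum G := by rw [hsum]
  -- Cauchy–Schwarz
  have hcs : ((∑ w, H.degree w : ℕ) : ℝ) ^ 2
      ≤ (Fintype.card V : ℝ) * ∑ w, (H.degree w : ℝ) ^ 2 := by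
    have := sq_sum_le_card_mul_sum_sq (s := (Finset.univ : Finset V))
      (f := fun w => (H.degree w : ℝ))
    simpa using this
  -- put everything together
  rw [← hcard]
  have hineqR : 2 * ∑ w, (H.degree w : ℝ) ^ 2 ≤ 2 * A.card * bipNum G := by
    have := hineq
    have : ((2 * ∑ w, H.degree w * H.degree w : ℕ) : ℝ)
        ≤ ((2 * A.card * bipNum G : ℕ) : ℝ) := by exact_mod_cast hineq
    push_cast at this
    calc 2 * ∑ w, (H.degree w : ℝ) ^ 2 = 2 * ∑ w, (H.degree w : ℝ) * H.degree w := by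
          simp_rw [sq]
    _ ≤ 2 * A.card * bipNum G := by exact_mod_cast this
  have hsumR : (∑ w, (H.degree w : ℝ)) = 2 * A.card := by
    exact_mod_cast congrArg (fun n : ℕ => (n : ℝ)) hsum
  have hcs' : (2 * (A.card : ℝ)) ^ 2 ≤ (Fintype.card V : ℝ) * ∑ w, (H.degree w : ℝ) ^ 2 := by
    rw [← hsumR]
    calc (∑ w, (H.degree w : ℝ)) ^ 2 = ((∑ w, H.degree w : ℕ) : ℝ) ^ 2 := by push_cast; ring_nf
    _ ≤ _ := hcs
  rcases Nat.eq_zero_or_pos A.card with h0 | hpos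
  · rw [h0]
    simp
    positivity
  · have hm : (0 : ℝ) < A.card := by exact_mod_cast hpos
    have hn : (0 : ℝ) ≤ Fintype.card V := by positivity
    nlinarith [hcs', hineqR, hm, hn]
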